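/- Let (Ω, 𝔄, μ) be a σ-finite measure space, let α, β ∈ L²(μ) be real-valued with β(x) − α(x) ≥ γ for μ-a.e. x and some constant γ > 0, and let U_ad := {u ∈ L²(μ) : α(x) ≤ u(x) ≤ β(x) for μ-a.e. x}. For u ∈ U_ad define the radial cone R(U_ad; u) := {h ∈ L²(μ) : ∃ t̄ > 0 such that u + t·h ∈ U_ad for all t ∈ [0, t̄]}, the contingent (Bouligand) tangent cone T(U_ad; u) := {h ∈ L²(μ) : ∃ sequences t_n → 0⁺ and h_n → h in L²(μ) with u + t_n·h_n ∈ U_ad for all n}, the normal cone N(U_ad; u) := {w ∈ L²(μ) : ∫_Ω w·h dμ ≤ 0 for all h ∈ T(U_ad; u)}, and for w ∈ L²(μ) the annihilator w^⊥ := {v ∈ L²(μ) : ∫_Ω w·v dμ = 0}. Then U_ad is polyhedric: for every u ∈ U_ad and every w ∈ N(U_ad; u), the L²-closure of R(U_ad; u) ∩ w^⊥ equals T(U_ad; u) ∩ w^⊥. -/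

import Mathlib

open MeasureTheory Filter

variable {Ω : Type*} [MeasurableSpace Ω] {μ : Measure Ω}

/-- The admissible set of box-constrained controls in `L²(μ)`. -/
def Uad (α β : Lp ℝ 2 μ) : Set (Lp ℝ 2 μ) :=
  {u | ∀ᵐ x ∂μ, (α : Ω → ℝ) x ≤ (u : Ω → ℝ) x ∧ (u : Ω → ℝ) x ≤ (β : Ω → ℝ) x}

/-- The radial cone to `K` at `u`. -/
def radialCone (K : Set (Lp ℝ 2 μ)) (u : Lp ℝ 2 μ) : Set (Lp ℝ 2 μ) :=
  {h | ∃ tbar : ℝ, 0 < tbar ∧ ∀ t ∈ Set.Icc (0 : ℝ) tbar, u + t • h ∈ K}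

/-- The contingent (Bouligand) tangent cone to `K` at `u`. -/
def contingentCone (K : Set (Lp ℝ 2 μ)) (u : Lp ℝ 2 μ) : Set (Lp ℝ 2 μ) :=
  {h | ∃ (t : ℕ → ℝ) (hn : ℕ → Lp ℝ 2 μ),
    (∀ n, 0 < t n) ∧ Tendsto t atTop (nhds 0) ∧ Tendsto hn atTop (nhds h) ∧
    ∀ n, u + t n • hn n ∈ K}

/-- The normal cone to `K` at `u`. -/
def normalCone (K : Set (Lp ℝ 2 μ)) (u : Lp ℝ 2 μ) : Set (Lp ℝ 2 μ) :=
  {w | ∀ h ∈ contingentCone K u, ∫ x, (w : Ω → ℝ) x * (h : Ω → ℝ) x ∂μ ≤ 0}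

/-- The annihilator of `w` in `L²(μ)`. -/
def annihilator (w : Lp ℝ 2 μ) : Set (Lp ℝ 2 μ) :=
  {v | ∫ x, (w : Ω → ℝ) x * (v : Ω → ℝ) x ∂μ = 0}

open scoped ENNReal NNReal

/-! ### Auxiliary lemmas -/

lemma integral_mul_eq_inner' (w v : Lp ℝ 2 μ) :
    ∫ x, (w : Ω → ℝ) x * (v : Ω → ℝ) x ∂μ = (inner ℝ w v : ℝ) := by
  rw [MeasureTheory.L2.inner_def]
  simp [RCLike.inner_apply, starRingEnd_apply, mul_comm]

lemma radialCone_subset_contingentCone' (K : Set (Lp ℝ 2 μ)) (u : Lp ℝ 2 μ) :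
    radialCone K u ⊆ contingentCone K u := by
  intro h hh
  obtain ⟨tbar, htbar, hmem⟩ := hh
  refine ⟨fun n => tbar / (n + 1), fun _ => h, fun n => by positivity, ?_, tendsto_const_nhds, ?_⟩
  · have := tendsto_const_div_atTop_nhds_zero_nat (C := tbar)
    refine ((this.comp (tendsto_add_atTop_nat 1)).congr fun n => ?_)
    simp [Function.comp]
  · intro n
    refine hmem _ ⟨by positivity, ?_⟩
    rw [div_le_iff₀ (by positivity)]
    nlinarith [htbar.le]

lemma tendsto_eLpNorm_two_zero' {F : ℕ → Ω → ℝ} (hF : ∀ n, AEStronglyMeasurable (F n) μ)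
    {g : Ω → ℝ} (hg : MemLp g 2 μ)
    (hdom : ∀ n, ∀ᵐ x ∂μ, |F n x| ≤ |g x|)
    (hlim : ∀ᵐ x ∂μ, Tendsto (fun n => F n x) atTop (nhds 0)) :
    Tendsto (fun n => eLpNorm (F n) 2 μ) atTop (nhds 0) := by
  have h2 : ∀ (f : Ω → ℝ), eLpNorm f 2 μ
      = (∫⁻ x, (‖f x‖₊ : ℝ≥0∞) ^ (2:ℝ) ∂μ) ^ (1/(2:ℝ)) := fun f => by
    rw [eLpNorm_eq_lintegral_rpow_enorm_toReal (by norm_num) (by norm_num)]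
    norm_num [enorm_eq_nnnorm]
  simp_rw [h2]
  have hlin : Tendsto (fun n => ∫⁻ x, (‖F n x‖₊ : ℝ≥0∞) ^ (2:ℝ) ∂μ) atTop
      (nhds (∫⁻ x, (0:ℝ≥0∞) ∂μ)) := by
    refine tendsto_lintegral_of_dominated_convergence' (fun x => (‖g x‖₊ : ℝ≥0∞) ^ (2:ℝ))
      (fun n => ((hF n).enorm.pow_const _)) (fun n => ?_)
      ((lintegral_rpow_enorm_lt_top_of_eLpNorm_lt_top (by norm_num) (by norm_num) hg.2).ne) ?_
    · filter_upwards [hdom n] with x hx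
      gcongr
      · rw [← NNReal.coe_le_coe]; simpa using hx
    · filter_upwards [hlim] with x hx
      have h1 : Tendsto (fun n => (‖F n x‖₊ : ℝ≥0∞)) atTop (nhds 0) := by
        have := hx.nnnorm
        simpa using (ENNReal.tendsto_coe.mpr this)
      have := h1.ennrpow_const (2:ℝ)
      simpa [ENNReal.zero_rpow_of_pos] using this
  rw [lintegral_zero] at hlin
  have := hlin.ennrpow_const (1/(2:ℝ))
  simpa [ENNReal.zero_rpow_of_pos] using this

lemma contingent_ae_sign' (α β u h : Lp ℝ 2 μ)
    (hh : h ∈ contingentCone (Uad α β) u) :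
    ∀ᵐ x ∂μ, ((u : Ω → ℝ) x = (α : Ω → ℝ) x → 0 ≤ (h : Ω → ℝ) x)
      ∧ ((u : Ω → ℝ) x = (β : Ω → ℝ) x → (h : Ω → ℝ) x ≤ 0) := by
  obtain ⟨t, hn, ht0, htlim, hhlim, hmem⟩ := hh
  have help : Tendsto (fun n => eLpNorm (⇑(hn n) - ⇑h) 2 μ) atTop (nhds 0) :=
    (Lp.tendsto_Lp_iff_tendsto_eLpNorm' hn h).mp hhlim
  have htm : TendstoInMeasure μ (fun n => ⇑(hn n)) atTop ⇑h :=
    tendstoInMeasure_of_tendsto_eLpNorm (by norm_num)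
      (fun n => Lp.aestronglyMeasurable _) (Lp.aestronglyMeasurable _) help
  obtain ⟨ns, -, hns⟩ := htm.exists_seq_tendsto_ae
  have hmem' : ∀ᵐ x ∂μ, ∀ n : ℕ,
      (α : Ω → ℝ) x ≤ (u : Ω → ℝ) x + t n * (hn n : Ω → ℝ) x
        ∧ (u : Ω → ℝ) x + t n * (hn n : Ω → ℝ) x ≤ (β : Ω → ℝ) x := by
    rw [ae_all_iff]
    intro n
    filter_upwards [hmem n, Lp.coeFn_add u (t n • hn n), Lp.coeFn_smul (t n) (hn n)]
      with x hx hadd hsmul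
    have : ((u + t n • hn n : Lp ℝ 2 μ) : Ω → ℝ) x
        = (u : Ω → ℝ) x + t n * (hn n : Ω → ℝ) x := by
      rw [hadd]; simp [hsmul]
    rw [this] at hx
    exact hx
  filter_upwards [hmem', hns] with x hx hlimx
  constructor
  · intro hua
    have key : ∀ i, 0 ≤ (hn (ns i) : Ω → ℝ) x := by
      intro i
      have := (hx (ns i)).1
      rw [hua] at this
      nlinarith [ht0 (ns i)]
    exact ge_of_tendsto' hlimx key
  · intro hub
    have key : ∀ i, (hn (ns i) : Ω → ℝ) x ≤ 0 := by
      intro i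
      have := (hx (ns i)).2
      rw [hub] at this
      nlinarith [ht0 (ns i)]
    exact le_of_tendsto' hlimx key

lemma indicator_mem_radial' (α β u : Lp ℝ 2 μ) (hu : u ∈ Uad α β)
    {S : Set Ω} (hS : MeasurableSet S) (hfin : μ S ≠ ∞) (c : ℝ)
    (hc : ∀ᵐ x ∂μ, x ∈ S → (α : Ω → ℝ) x ≤ (u : Ω → ℝ) x + c
      ∧ (u : Ω → ℝ) x + c ≤ (β : Ω → ℝ) x) :
    (memLp_indicator_const 2 hS c (Or.inr hfin)).toLp _ ∈ radialCone (Uad α β) u := by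
  set iS := (memLp_indicator_const 2 hS c (Or.inr hfin)).toLp _ with hiS
  refine ⟨1, one_pos, fun t ht => ?_⟩
  have hco := MemLp.coeFn_toLp (memLp_indicator_const 2 hS c (Or.inr hfin))
  filter_upwards [hu, hc, hco, Lp.coeFn_add u (t • iS), Lp.coeFn_smul t iS]
    with x hux hcx hcox hadd hsmul
  have hval : ((u + t • iS : Lp ℝ 2 μ) : Ω → ℝ) x
      = (u : Ω → ℝ) x + t * (S.indicator (fun _ => c) x) := by
    rw [hadd]
    simp only [Pi.add_apply]
    congr 1
    rw [hsmul]
    simp [hcox, hiS]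
  rw [hval]
  by_cases hxS : x ∈ S
  · simp only [Set.indicator_of_mem hxS]
    obtain ⟨h1, h2⟩ := hcx hxS
    obtain ⟨h3, h4⟩ := hux
    obtain ⟨ht0, ht1⟩ := ht
    rcases le_or_gt 0 c with hc0 | hc0
    · constructor <;> nlinarith
    · constructor <;> nlinarith
  · simpa [Set.indicator_of_notMem hxS] using hux

lemma integral_mul_indicator' (w : Lp ℝ 2 μ) {S : Set Ω} (hS : MeasurableSet S)
    (hfin : μ S ≠ ∞) (c : ℝ) :
    ∫ x, (w : Ω → ℝ) x
      * (((memLp_indicator_const 2 hS c (Or.inr hfin)).toLp _ : Lp ℝ 2 μ) : Ω → ℝ) x ∂μ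
      = c * ∫ x in S, (w : Ω → ℝ) x ∂μ := by
  have hco := MemLp.coeFn_toLp (memLp_indicator_const 2 hS c (Or.inr hfin))
  have : (fun x => (w : Ω → ℝ) x
      * (((memLp_indicator_const 2 hS c (Or.inr hfin)).toLp _ : Lp ℝ 2 μ) : Ω → ℝ) x)
      =ᵐ[μ] fun x => S.indicator (fun y => c * (w : Ω → ℝ) y) x := by
    filter_upwards [hco] with x hx
    rw [hx]
    by_cases hxS : x ∈ S
    · simp [Set.indicator_of_mem hxS, mul_comm]
    · simp [Set.indicator_of_notMem hxS]
  rw [integral_congr_ae this, integral_indicator hS, integral_const_mul]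

lemma ae_nonneg_on_of_setIntegral' [SigmaFinite μ] (w : Lp ℝ 2 μ) {A : Set Ω}
    (hA : MeasurableSet A)
    (hint : ∀ S : Set Ω, MeasurableSet S → μ S < ∞ → S ⊆ A →
      0 ≤ ∫ x in S, (w : Ω → ℝ) x ∂μ) :
    ∀ᵐ x ∂μ, x ∈ A → 0 ≤ (w : Ω → ℝ) x := by
  have key : 0 ≤ᵐ[μ.restrict A] fun x => ((w : Ω → ℝ) x) := by
    apply ae_nonneg_of_forall_setIntegral_nonneg_of_sigmaFinite
    · intro s hs hslt
      rw [Measure.restrict_apply hs] at hslt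
      have : IntegrableOn (fun x => (w : Ω → ℝ) x) (s ∩ A) μ :=
        integrableOn_Lp_of_measure_ne_top w fact_one_le_two_ennreal.elim hslt.ne
      rw [IntegrableOn, Measure.restrict_restrict hs]
      exact this
    · intro s hs hslt
      rw [Measure.restrict_apply hs] at hslt
      rw [Measure.restrict_restrict hs]
      exact hint _ (hs.inter hA) hslt Set.inter_subset_right
  have := (ae_restrict_iff' hA).mp key
  filter_upwards [this] with x hx hxA
  have h0 : (0:Ω→ℝ) x ≤ (w : Ω → ℝ) x := hx hxA
  simpa using h0

lemma ae_nonpos_on_of_setIntegral' [SigmaFinite μ] (w : Lp ℝ 2 μ) {A : Set Ω}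
    (hA : MeasurableSet A)
    (hint : ∀ S : Set Ω, MeasurableSet S → μ S < ∞ → S ⊆ A →
      ∫ x in S, (w : Ω → ℝ) x ∂μ ≤ 0) :
    ∀ᵐ x ∂μ, x ∈ A → (w : Ω → ℝ) x ≤ 0 := by
  have key : 0 ≤ᵐ[μ.restrict A] fun x => -((w : Ω → ℝ) x) := by
    apply ae_nonneg_of_forall_setIntegral_nonneg_of_sigmaFinite
    · intro s hs hslt
      rw [Measure.restrict_apply hs] at hslt
      have : IntegrableOn (fun x => (w : Ω → ℝ) x) (s ∩ A) μ :=
        integrableOn_Lp_of_measure_ne_top w fact_one_le_two_ennreal.elim hslt.ne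
      rw [IntegrableOn, Measure.restrict_restrict hs]
      exact this.neg
    · intro s hs hslt
      rw [Measure.restrict_apply hs] at hslt
      rw [Measure.restrict_restrict hs, integral_neg, neg_nonneg]
      exact hint _ (hs.inter hA) hslt Set.inter_subset_right
  have := (ae_restrict_iff' hA).mp key
  filter_upwards [this] with x hx hxA
  have h0 : (0:Ω→ℝ) x ≤ -((w : Ω → ℝ) x) := hx hxA
  simp only [Pi.zero_apply] at h0
  linarith

set_option synthInstance.maxHeartbeats 1000000 in
set_option maxHeartbeats 2000000 in
/-- Polyhedricity of the admissible set of box-constrained controls: for every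
`u ∈ U_ad` and every `w` in the normal cone to `U_ad` at `u`, the `L²`-closure
of `R(U_ad; u) ∩ w^⊥` equals `T(U_ad; u) ∩ w^⊥`. -/
theorem Uad_polyhedric [SigmaFinite μ]
    (α β : Lp ℝ 2 μ) (γ : ℝ) (hγ : 0 < γ)
    (hαβ : ∀ᵐ x ∂μ, γ ≤ (β : Ω → ℝ) x - (α : Ω → ℝ) x)
    (u : Lp ℝ 2 μ) (hu : u ∈ Uad α β)
    (w : Lp ℝ 2 μ) (hw : w ∈ normalCone (Uad α β) u) :
    closure (radialCone (Uad α β) u ∩ annihilator w)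
      = contingentCone (Uad α β) u ∩ annihilator w := by
  apply Set.Subset.antisymm
  · -- closure (R ∩ w^⊥) ⊆ T ∩ w^⊥
    intro v hv
    rw [mem_closure_iff_seq_limit] at hv
    obtain ⟨y, hy, hylim⟩ := hv
    constructor
    · choose tbar htbar hmem using fun n => (hy n).1
      refine ⟨fun n => min (tbar n) (1/(n+1)), y,
        fun n => lt_min (htbar n) (by positivity), ?_, hylim, ?_⟩
      · have hup : Tendsto (fun n : ℕ => 1/((n:ℝ)+1)) atTop (nhds 0) := by
          have := tendsto_const_div_atTop_nhds_zero_nat (C := (1:ℝ))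
          refine ((this.comp (tendsto_add_atTop_nat 1)).congr fun n => ?_)
          simp [Function.comp]
        refine tendsto_of_tendsto_of_tendsto_of_le_of_le tendsto_const_nhds hup
          (fun n => le_min (htbar n).le (by positivity)) (fun n => min_le_right _ _)
      · intro n
        exact hmem n _ ⟨le_min (htbar n).le (by positivity), min_le_left _ _⟩
    · have hcont : Tendsto (fun n => (inner ℝ w (y n) : ℝ)) atTop (nhds (inner ℝ w v : ℝ)) :=
        Tendsto.inner tendsto_const_nhds hylim
      have hzero : ∀ n, (inner ℝ w (y n) : ℝ) = 0 := fun n => by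
        rw [← integral_mul_eq_inner']; exact (hy n).2
      have : (inner ℝ w v : ℝ) = 0 :=
        tendsto_nhds_unique (hcont.congr fun n => hzero n) tendsto_const_nhds
      show ∫ x, (w : Ω → ℝ) x * (v : Ω → ℝ) x ∂μ = 0
      rw [integral_mul_eq_inner', this]
  · rintro h ⟨hT, hann⟩
    have hm : ∀ f : Lp ℝ 2 μ, Measurable (f : Ω → ℝ) :=
      fun f => (Lp.stronglyMeasurable f).measurable
    have hsign := contingent_ae_sign' α β u h hT
    -- sign conditions on w
    have hA : MeasurableSet {x | (u : Ω → ℝ) x = (α : Ω → ℝ) x} :=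
      measurableSet_eq_fun (hm u) (hm α)
    have hwA : ∀ᵐ x ∂μ, (u : Ω → ℝ) x = (α : Ω → ℝ) x → (w : Ω → ℝ) x ≤ 0 := by
      apply ae_nonpos_on_of_setIntegral' w hA
      intro S hS hSfin hSsub
      have hcond : ∀ᵐ x ∂μ, x ∈ S → (α:Ω→ℝ) x ≤ (u:Ω→ℝ) x + γ
          ∧ (u:Ω→ℝ) x + γ ≤ (β:Ω→ℝ) x := by
        filter_upwards [hu, hαβ] with x h1 h2 hxS
        have hux : (u:Ω→ℝ) x = (α:Ω→ℝ) x := hSsub hxS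
        exact ⟨by linarith, by linarith⟩
      have hrad := indicator_mem_radial' α β u hu hS hSfin.ne γ hcond
      have hle := hw _ (radialCone_subset_contingentCone' _ _ hrad)
      rw [integral_mul_indicator' w hS hSfin.ne] at hle
      nlinarith
    have hB : MeasurableSet {x | (u : Ω → ℝ) x = (β : Ω → ℝ) x} :=
      measurableSet_eq_fun (hm u) (hm β)
    have hwB : ∀ᵐ x ∂μ, (u : Ω → ℝ) x = (β : Ω → ℝ) x → 0 ≤ (w : Ω → ℝ) x := by
      apply ae_nonneg_on_of_setIntegral' w hB
      intro S hS hSfin hSsub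
      have hcond : ∀ᵐ x ∂μ, x ∈ S → (α:Ω→ℝ) x ≤ (u:Ω→ℝ) x + (-γ)
          ∧ (u:Ω→ℝ) x + (-γ) ≤ (β:Ω→ℝ) x := by
        filter_upwards [hu, hαβ] with x h1 h2 hxS
        have hux : (u:Ω→ℝ) x = (β:Ω→ℝ) x := hSsub hxS
        exact ⟨by linarith, by linarith [h1.2]⟩
      have hrad := indicator_mem_radial' α β u hu hS hSfin.ne (-γ) hcond
      have hle := hw _ (radialCone_subset_contingentCone' _ _ hrad)
      rw [integral_mul_indicator' w hS hSfin.ne] at hle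
      nlinarith
    -- w = 0 on strict interior slabs
    have hwC : ∀ᵐ x ∂μ, ∀ n : ℕ, ((α:Ω→ℝ) x + 1/(n+1) ≤ (u:Ω→ℝ) x
        ∧ (u:Ω→ℝ) x + 1/(n+1) ≤ (β:Ω→ℝ) x) → (w : Ω → ℝ) x = 0 := by
      rw [ae_all_iff]
      intro n
      have hCn : MeasurableSet {x | (α:Ω→ℝ) x + 1/((n:ℝ)+1) ≤ (u:Ω→ℝ) x
          ∧ (u:Ω→ℝ) x + 1/((n:ℝ)+1) ≤ (β:Ω→ℝ) x} := by
        rw [Set.setOf_and]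
        exact (measurableSet_le ((hm α).add_const _) (hm u)).inter
          (measurableSet_le ((hm u).add_const _) (hm β))
      have hle : ∀ᵐ x ∂μ, x ∈ {x | (α:Ω→ℝ) x + 1/((n:ℝ)+1) ≤ (u:Ω→ℝ) x
          ∧ (u:Ω→ℝ) x + 1/((n:ℝ)+1) ≤ (β:Ω→ℝ) x} → (w : Ω → ℝ) x ≤ 0 := by
        apply ae_nonpos_on_of_setIntegral' w hCn
        intro S hS hSfin hSsub
        have hcond : ∀ᵐ x ∂μ, x ∈ S → (α:Ω→ℝ) x ≤ (u:Ω→ℝ) x + 1/((n:ℝ)+1)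
            ∧ (u:Ω→ℝ) x + 1/((n:ℝ)+1) ≤ (β:Ω→ℝ) x := by
          filter_upwards [hu] with x h1 hxS
          obtain ⟨hc1, hc2⟩ := hSsub hxS
          have : (0:ℝ) < 1/((n:ℝ)+1) := by positivity
          exact ⟨by linarith, hc2⟩
        have hrad := indicator_mem_radial' α β u hu hS hSfin.ne (1/((n:ℝ)+1)) hcond
        have hle := hw _ (radialCone_subset_contingentCone' _ _ hrad)
        rw [integral_mul_indicator' w hS hSfin.ne] at hle
        have hpos : (0:ℝ) < 1/((n:ℝ)+1) := by positivity
        nlinarith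
      have hge : ∀ᵐ x ∂μ, x ∈ {x | (α:Ω→ℝ) x + 1/((n:ℝ)+1) ≤ (u:Ω→ℝ) x
          ∧ (u:Ω→ℝ) x + 1/((n:ℝ)+1) ≤ (β:Ω→ℝ) x} → 0 ≤ (w : Ω → ℝ) x := by
        apply ae_nonneg_on_of_setIntegral' w hCn
        intro S hS hSfin hSsub
        have hcond : ∀ᵐ x ∂μ, x ∈ S → (α:Ω→ℝ) x ≤ (u:Ω→ℝ) x + (-(1/((n:ℝ)+1)))
            ∧ (u:Ω→ℝ) x + (-(1/((n:ℝ)+1))) ≤ (β:Ω→ℝ) x := by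
          filter_upwards [hu] with x h1 hxS
          obtain ⟨hc1, hc2⟩ := hSsub hxS
          have : (0:ℝ) < 1/((n:ℝ)+1) := by positivity
          exact ⟨by linarith, by linarith [h1.2]⟩
        have hrad := indicator_mem_radial' α β u hu hS hSfin.ne (-(1/((n:ℝ)+1))) hcond
        have hle := hw _ (radialCone_subset_contingentCone' _ _ hrad)
        rw [integral_mul_indicator' w hS hSfin.ne] at hle
        have hpos : (0:ℝ) < 1/((n:ℝ)+1) := by positivity
        nlinarith
      filter_upwards [hle, hge] with x h1 h2 hx
      exact le_antisymm (h1 hx) (h2 hx)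
    -- w vanishes on the strict interior
    have hwint : ∀ᵐ x ∂μ, (α:Ω→ℝ) x < (u:Ω→ℝ) x → (u:Ω→ℝ) x < (β:Ω→ℝ) x
        → (w : Ω → ℝ) x = 0 := by
      filter_upwards [hwC] with x hx h1 h2
      obtain ⟨n, hn⟩ := exists_nat_one_div_lt
        (lt_min (sub_pos.mpr h1) (sub_pos.mpr h2))
      refine hx n ⟨?_, ?_⟩
      · have := lt_of_lt_of_le hn (min_le_left _ _)
        linarith
      · have := lt_of_lt_of_le hn (min_le_right _ _)
        linarith
    -- w * h = 0 a.e.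
    have hwh_int : Integrable (fun x => (w : Ω → ℝ) x * (h : Ω → ℝ) x) μ := by
      have := MeasureTheory.L2.integrable_inner (𝕜 := ℝ) w h
      simpa [RCLike.inner_apply, starRingEnd_apply, mul_comm] using this
    have hwh_le : ∀ᵐ x ∂μ, (w : Ω → ℝ) x * (h : Ω → ℝ) x ≤ 0 := by
      filter_upwards [hu, hsign, hwA, hwB, hwint] with x hux hsx hwAx hwBx hwintx
      rcases eq_or_lt_of_le hux.1 with hxa | hxa
      · exact mul_nonpos_iff.mpr (Or.inr ⟨hwAx hxa.symm, hsx.1 hxa.symm⟩)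
      · rcases eq_or_lt_of_le hux.2 with hxb | hxb
        · exact mul_nonpos_iff.mpr (Or.inl ⟨hwBx hxb, hsx.2 hxb⟩)
        · rw [hwintx hxa hxb, zero_mul]
    have hwh : ∀ᵐ x ∂μ, (w : Ω → ℝ) x * (h : Ω → ℝ) x = 0 := by
      have hneg : 0 ≤ᵐ[μ] fun x => -((w : Ω → ℝ) x * (h : Ω → ℝ) x) := by
        filter_upwards [hwh_le] with x hx
        simp only [Pi.zero_apply]
        linarith
      have hz : ∫ x, -((w : Ω → ℝ) x * (h : Ω → ℝ) x) ∂μ = 0 := by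
        rw [integral_neg, hann, neg_zero]
      have := (integral_eq_zero_iff_of_nonneg_ae hneg hwh_int.neg).mp hz
      filter_upwards [this] with x hx
      have : -((w : Ω → ℝ) x * (h : Ω → ℝ) x) = 0 := hx
      linarith
    -- the approximating sequence
    set E : ℕ → Set Ω := fun n => {x | |(h : Ω → ℝ) x| ≤ (n:ℝ)+1
      ∧ (0 ≤ (h : Ω → ℝ) x ∨ (α:Ω→ℝ) x + 1/((n:ℝ)+1) ≤ (u:Ω→ℝ) x)
      ∧ ((h : Ω → ℝ) x ≤ 0 ∨ (u:Ω→ℝ) x + 1/((n:ℝ)+1) ≤ (β:Ω→ℝ) x)} with hEdef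
    have hE : ∀ n, MeasurableSet (E n) := by
      intro n
      rw [hEdef]
      simp only [Set.setOf_and, Set.setOf_or]
      exact (measurableSet_le (hm h).abs measurable_const).inter
        (((measurableSet_le measurable_const (hm h)).union
          (measurableSet_le ((hm α).add_const _) (hm u))).inter
        (((measurableSet_le (hm h) measurable_const).union
          (measurableSet_le ((hm u).add_const _) (hm β)))))
    have hmemE : ∀ n, MemLp ((E n).indicator ((h : Ω → ℝ))) 2 μ :=
      fun n => (Lp.memLp h).indicator (hE n)
    set hk : ℕ → Lp ℝ 2 μ := fun n => (hmemE n).toLp _ with hhkdef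
    -- each hk n is radial
    have hkrad : ∀ n, hk n ∈ radialCone (Uad α β) u := by
      intro n
      refine ⟨1/((n:ℝ)+1)^2, by positivity, fun t ht => ?_⟩
      filter_upwards [hu, (hmemE n).coeFn_toLp, Lp.coeFn_add u (t • hk n),
        Lp.coeFn_smul t (hk n)] with x hux hco hadd hsmul
      have hval : ((u + t • hk n : Lp ℝ 2 μ) : Ω → ℝ) x
          = (u : Ω → ℝ) x + t * ((E n).indicator ((h : Ω → ℝ)) x) := by
        rw [hadd]
        simp only [Pi.add_apply]
        congr 1
        rw [hsmul]
        simp [hco, hhkdef]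
      rw [hval]
      obtain ⟨ht0, ht1⟩ := ht
      by_cases hxE : x ∈ E n
      · rw [Set.indicator_of_mem hxE]
        obtain ⟨habs, hor1, hor2⟩ := hxE
        set M : ℝ := (n:ℝ)+1 with hM
        have hMpos : (0:ℝ) < M := by positivity
        have htM : t * M ≤ 1/M := by
          calc t * M ≤ (1/M^2) * M := by nlinarith
          _ = 1/M := by rw [pow_two]; field_simp
        obtain ⟨hab1, hab2⟩ := abs_le.mp habs
        constructor
        · rcases le_or_gt 0 ((h : Ω → ℝ) x) with hh0 | hh0
          · nlinarith [hux.1]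
          · rcases hor1 with hor | hor
            · linarith
            · nlinarith [mul_nonneg ht0 (by linarith : (0:ℝ) ≤ M + (h : Ω → ℝ) x)]
        · rcases le_or_gt ((h : Ω → ℝ) x) 0 with hh0 | hh0
          · nlinarith [hux.2]
          · rcases hor2 with hor | hor
            · linarith
            · nlinarith [mul_nonneg ht0 (by linarith : (0:ℝ) ≤ M - (h : Ω → ℝ) x)]
      · rw [Set.indicator_of_notMem hxE]
        simpa using hux
    -- each hk n is in the annihilator
    have hkann : ∀ n, hk n ∈ annihilator w := by
      intro n
      show ∫ x, (w : Ω → ℝ) x * ((hk n : Lp ℝ 2 μ) : Ω → ℝ) x ∂μ = 0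
      have : (fun x => (w : Ω → ℝ) x * ((hk n : Lp ℝ 2 μ) : Ω → ℝ) x)
          =ᵐ[μ] (fun _ => (0:ℝ)) := by
        filter_upwards [hwh, (hmemE n).coeFn_toLp] with x hx hco
        rw [hco]
        by_cases hxE : x ∈ E n
        · rw [Set.indicator_of_mem hxE]; exact hx
        · rw [Set.indicator_of_notMem hxE, mul_zero]
      rw [integral_congr_ae this, integral_zero]
    -- hk n → h in L²
    have hktend : Tendsto hk atTop (nhds h) := by
      rw [Lp.tendsto_Lp_iff_tendsto_eLpNorm']
      have hcongr : ∀ n, eLpNorm (⇑(hk n) - ⇑h) 2 μ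
          = eLpNorm ((E n).indicator ((h : Ω → ℝ)) - ⇑h) 2 μ := fun n =>
        eLpNorm_congr_ae (((hmemE n).coeFn_toLp).sub (EventuallyEq.refl _ _))
      simp_rw [hcongr]
      apply tendsto_eLpNorm_two_zero' (g := (h : Ω → ℝ))
      · exact fun n => ((hmemE n).aestronglyMeasurable).sub (Lp.aestronglyMeasurable h)
      · exact Lp.memLp h
      · intro n
        filter_upwards with x
        by_cases hxE : x ∈ E n
        · simp [Set.indicator_of_mem hxE]
        · simp [Set.indicator_of_notMem hxE]
      · -- a.e. pointwise convergence
        filter_upwards [hu, hsign] with x hux hsx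
        have hev : ∀ᶠ n in atTop, x ∈ E n := by
          have h1 : ∀ᶠ n : ℕ in atTop, |(h : Ω → ℝ) x| ≤ (n:ℝ)+1 := by
            filter_upwards [eventually_ge_atTop ⌈|(h : Ω → ℝ) x|⌉₊] with n hn
            calc |(h : Ω → ℝ) x| ≤ ⌈|(h : Ω → ℝ) x|⌉₊ := Nat.le_ceil _
            _ ≤ (n:ℝ) := by exact_mod_cast hn
            _ ≤ (n:ℝ)+1 := by linarith
          have h2 : ∀ᶠ n : ℕ in atTop,
              (0 ≤ (h : Ω → ℝ) x ∨ (α:Ω→ℝ) x + 1/((n:ℝ)+1) ≤ (u:Ω→ℝ) x) := by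
            rcases eq_or_lt_of_le hux.1 with hxa | hxa
            · exact Eventually.of_forall fun n => Or.inl (hsx.1 hxa.symm)
            · obtain ⟨N, hN⟩ := exists_nat_one_div_lt (sub_pos.mpr hxa)
              filter_upwards [eventually_ge_atTop N] with n hn
              refine Or.inr ?_
              have : 1/((n:ℝ)+1) ≤ 1/((N:ℝ)+1) := by
                apply one_div_le_one_div_of_le (by positivity)
                have : (N:ℝ) ≤ (n:ℝ) := by exact_mod_cast hn
                linarith
              linarith
          have h3 : ∀ᶠ n : ℕ in atTop,
              ((h : Ω → ℝ) x ≤ 0 ∨ (u:Ω→ℝ) x + 1/((n:ℝ)+1) ≤ (β:Ω→ℝ) x) := by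
            rcases eq_or_lt_of_le hux.2 with hxb | hxb
            · exact Eventually.of_forall fun n => Or.inl (hsx.2 hxb)
            · obtain ⟨N, hN⟩ := exists_nat_one_div_lt (sub_pos.mpr hxb)
              filter_upwards [eventually_ge_atTop N] with n hn
              refine Or.inr ?_
              have : 1/((n:ℝ)+1) ≤ 1/((N:ℝ)+1) := by
                apply one_div_le_one_div_of_le (by positivity)
                have : (N:ℝ) ≤ (n:ℝ) := by exact_mod_cast hn
                linarith
              linarith
          filter_upwards [h1, h2, h3] with n hn1 hn2 hn3
          exact ⟨hn1, hn2, hn3⟩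
        refine Tendsto.congr' ?_ (tendsto_const_nhds (x := (0:ℝ)))
        filter_upwards [hev] with n hn
        simp [Set.indicator_of_mem hn]
    exact mem_closure_of_tendsto hktend
      (Eventually.of_forall fun n => ⟨hkrad n, hkann n⟩)
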